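/- Let k, n be positive integers with k ≤ n and let g = gcd(k, n). The solution space of the system of n linear equations x_j + x_{j+1} + ... + x_{j+k-1} = 0 for j = 1, ..., n (indices taken cyclically modulo n) in variables x_1, ..., x_n over ℝ has dimension g - 1. -/

import Mathlib

open Finset

/-- The linear map sending `x : ZMod n → ℝ` to the vector of cyclic window sums of length `k`:
`j ↦ x j + x (j+1) + ⋯ + x (j+k-1)`. -/
def windowSum (k n : ℕ) : (ZMod n → ℝ) →ₗ[ℝ] (ZMod n → ℝ) where
  toFun x := fun j => ∑ t ∈ Finset.range k, x (j + (t : ZMod n))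
  map_add' x y := by
    funext j
    simp [Finset.sum_add_distrib]
  map_smul' c x := by
    funext j
    simp [Finset.mul_sum]

section Aux

lemma sum_range_zmod (g : ℕ) [NeZero g] (f : ZMod g → ℝ) :
    ∑ t ∈ range g, f ((t : ℕ) : ZMod g) = ∑ r : ZMod g, f r := by
  apply Finset.sum_nbij' (i := fun t => ((t : ℕ) : ZMod g)) (j := fun r => r.val)
  · intro a ha; exact Finset.mem_univ _
  · intro r _; exact Finset.mem_range.2 (ZMod.val_lt r)
  · intro a ha
    exact ZMod.val_natCast_of_lt (Finset.mem_range.1 ha)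
  · intro r _
    exact ZMod.natCast_rightInverse r
  · intro a _; rfl

lemma sum_range_mul_zmod (g : ℕ) [NeZero g] (m : ℕ) (f : ZMod g → ℝ) :
    ∑ t ∈ range (m * g), f ((t : ℕ) : ZMod g) = m • ∑ r : ZMod g, f r := by
  induction m with
  | zero => simp
  | succ m ih =>
    rw [Nat.succ_mul, Finset.sum_range_add, ih, succ_nsmul]
    congr 1
    rw [← sum_range_zmod g f]
    apply Finset.sum_congr rfl
    intro t _
    congr 1
    push_cast
    simp [ZMod.natCast_self]

end Aux

/-- The solution space of the cyclic system `x_j + x_{j+1} + ⋯ + x_{j+k-1} = 0`, `j = 1, …, n`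
(indices mod `n`), has dimension `gcd(k,n) - 1`. -/
theorem dim_pure_kinematic_shifts (k n : ℕ) [NeZero n] (hk : 0 < k) (hkn : k ≤ n) :
    Module.finrank ℝ (LinearMap.ker (windowSum k n)) = Nat.gcd k n - 1 := by
  set g := Nat.gcd k n with hgdef
  have hg : 0 < g := Nat.gcd_pos_of_pos_left n hk
  have hgk : g ∣ k := Nat.gcd_dvd_left k n
  have hgn : g ∣ n := Nat.gcd_dvd_right k n
  haveI : NeZero g := ⟨hg.ne'⟩
  -- the projection ZMod n → ZMod g
  let φ : ZMod n → ZMod g := ZMod.castHom hgn (ZMod g)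
  have hφnat : ∀ t : ℕ, φ ((t : ℕ) : ZMod n) = ((t : ℕ) : ZMod g) := by
    intro t; simp [φ, map_natCast]
  have hφadd : ∀ a b : ZMod n, φ (a + b) = φ a + φ b := fun a b => map_add _ a b
  -- precomposition map
  let L : (ZMod g → ℝ) →ₗ[ℝ] (ZMod n → ℝ) := LinearMap.funLeft ℝ ℝ φ
  have hLapp : ∀ (y : ZMod g → ℝ) (j : ZMod n), L y j = y (φ j) := fun _ _ => rfl
  have hφsurj : Function.Surjective φ := by
    intro r
    refine ⟨((r.val : ℕ) : ZMod n), ?_⟩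
    rw [hφnat]
    exact ZMod.natCast_rightInverse r
  have hLinj : Function.Injective L := LinearMap.funLeft_injective_of_surjective ℝ ℝ φ hφsurj
  -- sum functional on ZMod g → ℝ
  let S : (ZMod g → ℝ) →ₗ[ℝ] ℝ :=
    { toFun := fun y => ∑ r : ZMod g, y r
      map_add' := fun a b => by simp [Finset.sum_add_distrib]
      map_smul' := fun c a => by simp [Finset.mul_sum] }
  -- key: kernel of windowSum equals image of kernel of S
  have hker : LinearMap.ker (windowSum k n) = Submodule.map L (LinearMap.ker S) := by
    apply le_antisymm
    · intro x hx
      have hx' : ∀ j : ZMod n, ∑ t ∈ range k, x (j + ((t : ℕ) : ZMod n)) = 0 := by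
        intro j
        have := congrFun (LinearMap.mem_ker.1 hx) j
        simpa [windowSum] using this
      -- step: x (j + k) = x j
      have step : ∀ j : ZMod n, x (j + ((k : ℕ) : ZMod n)) = x j := by
        intro j
        have h1 : ∑ t ∈ range (k + 1), x (j + ((t : ℕ) : ZMod n))
            = ∑ t ∈ range k, x (j + ((t : ℕ) : ZMod n)) + x (j + ((k : ℕ) : ZMod n)) :=
          Finset.sum_range_succ _ k
        have h2 : ∑ t ∈ range (k + 1), x (j + ((t : ℕ) : ZMod n))
            = (∑ t ∈ range k, x ((j + 1) + ((t : ℕ) : ZMod n))) + x j := by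
          rw [Finset.sum_range_succ' (fun t => x (j + ((t : ℕ) : ZMod n))) k]
          congr 1
          · apply Finset.sum_congr rfl
            intro t _
            congr 1
            push_cast
            ring
          · simp
        rw [hx' j] at h1
        rw [hx' (j + 1)] at h2
        rw [h1] at h2
        linarith [h2]
      -- invariance under adding integer multiples of k
      have stepz : ∀ (m : ℤ) (j : ZMod n), x (j + (m : ZMod n) * ((k : ℕ) : ZMod n)) = x j := by
        intro m
        induction m using Int.induction_on with
        | zero => intro j; simp
        | succ i ih =>
          intro j
          have : j + ((i : ℤ) + 1 : ℤ) * ((k : ℕ) : ZMod n)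
              = (j + ((i : ℤ) : ZMod n) * ((k : ℕ) : ZMod n)) + ((k : ℕ) : ZMod n) := by
            push_cast; ring
          rw [this, step, ih]
        | pred i ih =>
          intro j
          have : j + (-(i : ℤ) - 1 : ℤ) * ((k : ℕ) : ZMod n) + ((k : ℕ) : ZMod n)
              = j + ((-(i : ℤ) : ℤ) : ZMod n) * ((k : ℕ) : ZMod n) := by
            push_cast; ring
          have h := step (j + ((-(i : ℤ) - 1 : ℤ) : ZMod n) * ((k : ℕ) : ZMod n))
          rw [show j + ((-(i : ℤ) - 1 : ℤ) : ZMod n) * ((k : ℕ) : ZMod n) + ((k : ℕ) : ZMod n)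
              = j + ((-(i : ℤ) : ℤ) : ZMod n) * ((k : ℕ) : ZMod n) by push_cast; ring] at h
          rw [ih j] at h
          exact h.symm ▸ (by rw [← h])
      -- invariance under adding g
      have stepg : ∀ j : ZMod n, x (j + ((g : ℕ) : ZMod n)) = x j := by
        intro j
        have hbez : (g : ℤ) = k * Nat.gcdA k n + n * Nat.gcdB k n := Nat.gcd_eq_gcd_ab k n
        have hcast : ((g : ℕ) : ZMod n) = ((Nat.gcdA k n : ℤ) : ZMod n) * ((k : ℕ) : ZMod n) := by
          have : (((g : ℤ) : ZMod n)) = (((k * Nat.gcdA k n + n * Nat.gcdB k n : ℤ)) : ZMod n) := by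
            rw [← hbez]
          push_cast at this ⊢
          rw [this]
          simp [ZMod.natCast_self]
          ring
        rw [hcast]
        exact stepz (Nat.gcdA k n) j
      have stepgm : ∀ (m : ℕ) (j : ZMod n), x (j + (m : ℕ) * ((g : ℕ) : ZMod n)) = x j := by
        intro m
        induction m with
        | zero => intro j; simp
        | succ i ih =>
          intro j
          have : j + ((i + 1 : ℕ) : ZMod n) * ((g : ℕ) : ZMod n)
              = (j + ((i : ℕ) : ZMod n) * ((g : ℕ) : ZMod n)) + ((g : ℕ) : ZMod n) := by
            push_cast; ring
          rw [this, stepg, ih]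
      -- x factors through φ
      have hφval : ∀ j : ZMod n, φ j = ((j.val : ℕ) : ZMod g) := by
        intro j
        have h := hφnat j.val
        rwa [ZMod.natCast_rightInverse j] at h
      let y : ZMod g → ℝ := fun r => x ((r.val : ℕ) : ZMod n)
      have hfactor : ∀ j : ZMod n, x j = y (φ j) := by
        intro j
        show x j = x ((((φ j).val : ℕ)) : ZMod n)
        have hv : (φ j).val = j.val % g := by rw [hφval, ZMod.val_natCast]
        rw [hv]
        have hdecomp : j = ((j.val % g : ℕ) : ZMod n)
            + ((j.val / g : ℕ) : ZMod n) * ((g : ℕ) : ZMod n) := by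
          have hmd : ((j.val % g) + (j.val / g) * g : ℕ) = j.val := Nat.mod_add_div' j.val g
          calc j = ((j.val : ℕ) : ZMod n) := (ZMod.natCast_rightInverse j).symm
            _ = _ := by
                conv_lhs => rw [← hmd]
                push_cast; ring
        conv_lhs => rw [hdecomp]
        exact stepgm (j.val / g) _
      refine ⟨y, ?_, ?_⟩
      · show ∑ r : ZMod g, y r = 0
        obtain ⟨m, hm⟩ := hgk
        have hm' : k = m * g := by rw [hm, Nat.mul_comm]
        have hm0 : 0 < m := by
          rcases Nat.eq_zero_or_pos m with h0 | h0
          · exfalso; rw [h0, Nat.mul_zero] at hm; omega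
          · exact h0
        have hw := hx' 0
        have hsum0 : ∑ t ∈ range k, y ((t : ℕ) : ZMod g) = 0 := by
          rw [← hw]
          apply Finset.sum_congr rfl
          intro t _
          rw [hfactor (0 + ((t : ℕ) : ZMod n)), hφadd, hφnat]
          simp [φ]
        rw [hm', sum_range_mul_zmod g m y] at hsum0
        have : (m : ℝ) * ∑ r : ZMod g, y r = 0 := by
          rw [← nsmul_eq_mul]; exact hsum0
        rcases mul_eq_zero.1 this with h | h
        · exfalso; exact (Nat.cast_ne_zero.2 hm0.ne') h
        · exact h
      · funext j
        rw [hLapp]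
        exact (hfactor j).symm
    · rintro z ⟨y, hy, rfl⟩
      rw [LinearMap.mem_ker]
      funext j
      have : (windowSum k n) (L y) j = ∑ t ∈ range k, y (φ j + ((t : ℕ) : ZMod g)) := by
        simp only [windowSum, LinearMap.coe_mk, AddHom.coe_mk]
        apply Finset.sum_congr rfl
        intro t _
        rw [hLapp, hφadd, hφnat]
      rw [this]
      obtain ⟨m, hm⟩ := hgk
      have hm' : k = m * g := by rw [hm, Nat.mul_comm]
      rw [hm', sum_range_mul_zmod g m (fun s => y (φ j + s))]
      have hsum : ∑ s : ZMod g, y (φ j + s) = ∑ r : ZMod g, y r :=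
        Fintype.sum_equiv (Equiv.addLeft (φ j)) _ _ (fun s => by simp)
      rw [hsum]
      have h0 : ∑ r : ZMod g, y r = 0 := hy
      rw [h0]
      simp
  rw [hker]
  haveI : FiniteDimensional ℝ (ZMod g → ℝ) := inferInstance
  rw [← (Submodule.equivMapOfInjective L hLinj (LinearMap.ker S)).finrank_eq]
  -- finrank of ker S = g - 1
  have hrange : LinearMap.range S = ⊤ := by
    rw [LinearMap.range_eq_top]
    intro c
    refine ⟨fun _ => c / g, ?_⟩
    simp [S]
    field_simp
  have := LinearMap.finrank_range_add_finrank_ker S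
  rw [hrange, finrank_top, Module.finrank_self, Module.finrank_fintype_fun_eq_card] at this
  have hcard : Fintype.card (ZMod g) = g := ZMod.card g
  rw [hcard] at this
  omega
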